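/- Average heat absorbed by the dephased qubit engine: in the qubit Otto setup, the dephased average heat absorbed ⟨⟨Q_M⟩⟩ := Tr[Φ(Δ₂(U ρ₁ U†)) H₂] − Tr[U ρ₁ U† H₂] equals 2(1 − 2δ′) θ ν₂ tanh(βν₁). -/

import Mathlib

open Matrix

lemma vmv_mulVec (v w x : Fin 2 → ℂ) : vecMulVec v w *ᵥ x = (w ⬝ᵥ x) • v := by
  ext i
  simp [mulVec, vecMulVec_apply, dotProduct, Finset.mul_sum]
  ring

lemma mul_vmv (A : Matrix (Fin 2) (Fin 2) ℂ) (v w : Fin 2 → ℂ) :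
    A * vecMulVec v w = vecMulVec (A *ᵥ v) w := by
  ext i j
  simp [Matrix.mul_apply, vecMulVec_apply, mulVec, dotProduct, Finset.sum_mul]
  fin_cases i <;> simp <;> ring

lemma vmv_mul (A : Matrix (Fin 2) (Fin 2) ℂ) (v w : Fin 2 → ℂ) :
    vecMulVec v w * A = vecMulVec v (w ᵥ* A) := by
  ext i j
  simp [Matrix.mul_apply, vecMulVec_apply, vecMul, dotProduct, Finset.mul_sum]
  ring

lemma smul_vmv (c : ℂ) (v w : Fin 2 → ℂ) :
    vecMulVec (c • v) w = c • vecMulVec v w := by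
  ext i j
  simp [vecMulVec_apply, mul_assoc]

lemma trace_mul_vmv (X : Matrix (Fin 2) (Fin 2) ℂ) (v w : Fin 2 → ℂ) :
    (X * vecMulVec v w).trace = w ⬝ᵥ (X *ᵥ v) := by
  simp [trace, diag, Matrix.mul_apply, vecMulVec_apply, mulVec, dotProduct, Fin.sum_univ_two]
  ring

lemma star_dp_comm (u v : Fin 2 → ℂ) : star u ⬝ᵥ v = starRingEnd ℂ (star v ⬝ᵥ u) := by
  simp [dotProduct, Fin.sum_univ_two, mul_comm]

lemma dp_vmv (u v : Fin 2 → ℂ) :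
    star v ⬝ᵥ (vecMulVec u (star u) *ᵥ v) =
      (star v ⬝ᵥ u) * starRingEnd ℂ (star v ⬝ᵥ u) := by
  rw [vmv_mulVec, dotProduct_smul, smul_eq_mul, star_dp_comm u v]
  ring

lemma onb_complete (fp fm : Fin 2 → ℂ) (hfp : star fp ⬝ᵥ fp = 1) (hfm : star fm ⬝ᵥ fm = 1)
    (hfpm : star fp ⬝ᵥ fm = 0) :
    vecMulVec fp (star fp) + vecMulVec fm (star fm) = 1 := by
  have hfmp : star fm ⬝ᵥ fp = 0 := by
    rw [star_dp_comm, hfpm, map_zero]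
  set F : Matrix (Fin 2) (Fin 2) ℂ := Matrix.of (fun i j => if j = 0 then fp i else fm i) with hF
  have h1 : Fᴴ * F = 1 := by
    ext i j
    simp only [dotProduct, Fin.sum_univ_two, Pi.star_apply, RCLike.star_def] at hfp hfm hfpm hfmp
    fin_cases i <;> fin_cases j <;>
      simp [hF, Matrix.mul_apply, conjTranspose_apply, Matrix.one_apply, Fin.sum_univ_two] <;>
      first
        | linear_combination hfp
        | linear_combination hfm
        | linear_combination hfpm
        | linear_combination hfmp
  have h2 : F * Fᴴ = 1 := mul_eq_one_comm.mp h1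
  rw [← h2]
  ext i j
  simp [hF, Matrix.mul_apply, conjTranspose_apply, vecMulVec_apply, Fin.sum_univ_two]

/-- Average heat absorbed by the dephased qubit engine: in the qubit Otto
setup — orthonormal bases `(e₊, e₋)` and `(f₊, f₋)` of `ℂ²`,
`H₂ = ν₂ (f₊f₊ᴴ − f₋f₋ᴴ)`, Gibbs state
`ρ₁ = (e^{−βν₁} e₊e₊ᴴ + e^{βν₁} e₋e₋ᴴ)/(2 cosh(βν₁))`, `U` unitary, `Φ` a unital channel,
`Δ₂` the dephasing channel in the `(f₊, f₋)` basis, `δ′ = |f₊ᴴ U e₋|²` and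
`θ = f₋ᴴ Φ(f₊f₊ᴴ) f₋` — the dephased average heat absorbed
`⟨⟨Q_M⟩⟩ := Tr[Φ(Δ₂(U ρ₁ Uᴴ)) H₂] − Tr[U ρ₁ Uᴴ H₂]` equals
`2 (1 − 2δ′) θ ν₂ tanh(βν₁)`. -/
theorem dephased_heat_absorbed_qubit
    (β ν₁ ν₂ : ℝ) (hβ : 0 < β) (hν₁ : 0 < ν₁) (hν₂ : 0 < ν₂)
    (ep em fp fm : Fin 2 → ℂ)
    (hep : star ep ⬝ᵥ ep = 1) (hem : star em ⬝ᵥ em = 1) (hepm : star ep ⬝ᵥ em = 0)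
    (hfp : star fp ⬝ᵥ fp = 1) (hfm : star fm ⬝ᵥ fm = 1) (hfpm : star fp ⬝ᵥ fm = 0)
    (H₁ H₂ ρ₁ : Matrix (Fin 2) (Fin 2) ℂ)
    (hH₁ : H₁ = (ν₁ : ℂ) • (vecMulVec ep (star ep) - vecMulVec em (star em)))
    (hH₂ : H₂ = (ν₂ : ℂ) • (vecMulVec fp (star fp) - vecMulVec fm (star fm)))
    (hρ₁ : ρ₁ = ((2 * Real.cosh (β * ν₁) : ℝ) : ℂ)⁻¹ •
        ((Real.exp (-(β * ν₁)) : ℂ) • vecMulVec ep (star ep) +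
         (Real.exp (β * ν₁) : ℂ) • vecMulVec em (star em)))
    (U V : Matrix (Fin 2) (Fin 2) ℂ)
    (hU : Uᴴ * U = 1) (hU' : U * Uᴴ = 1)
    (hV : Vᴴ * V = 1) (hV' : V * Vᴴ = 1)
    {K : ℕ} (Kr : Fin K → Matrix (Fin 2) (Fin 2) ℂ)
    (hKr : ∑ k, (Kr k)ᴴ * Kr k = 1) (hKr' : ∑ k, Kr k * (Kr k)ᴴ = 1)
    (Φ : Matrix (Fin 2) (Fin 2) ℂ → Matrix (Fin 2) (Fin 2) ℂ)
    (hΦ : ∀ X, Φ X = ∑ k, Kr k * X * (Kr k)ᴴ)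
    (Δ₂ : Matrix (Fin 2) (Fin 2) ℂ → Matrix (Fin 2) (Fin 2) ℂ)
    (hΔ₂ : ∀ X, Δ₂ X = vecMulVec fp (star fp) * X * vecMulVec fp (star fp) +
        vecMulVec fm (star fm) * X * vecMulVec fm (star fm))
    (δ' : ℝ) (hδ' : δ' = ‖star fp ⬝ᵥ (U *ᵥ em)‖ ^ 2)
    (θ : ℂ) (hθ : θ = star fm ⬝ᵥ (Φ (vecMulVec fp (star fp)) *ᵥ fm)) :
    (Φ (Δ₂ (U * ρ₁ * Uᴴ)) * H₂).trace - (U * ρ₁ * Uᴴ * H₂).trace =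
      2 * (1 - 2 * (δ' : ℂ)) * θ * (ν₂ : ℂ) * (Real.tanh (β * ν₁) : ℂ) := by
  -- notation
  have hPQ : vecMulVec fp (star fp) + vecMulVec fm (star fm) = 1 :=
    onb_complete fp fm hfp hfm hfpm
  have hPQe : vecMulVec ep (star ep) + vecMulVec em (star em) = 1 :=
    onb_complete ep em hep hem hepm
  -- channel properties
  have hΦone : Φ 1 = 1 := by rw [hΦ]; simpa using hKr'
  have hΦtr : ∀ X, (Φ X).trace = X.trace := by
    intro X
    rw [hΦ, trace_sum]
    calc ∑ k, (Kr k * X * (Kr k)ᴴ).trace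
        = ∑ k, ((Kr k)ᴴ * Kr k * X).trace := by
          refine Finset.sum_congr rfl fun k _ => ?_
          rw [Matrix.trace_mul_cycle]
      _ = ((∑ k, (Kr k)ᴴ * Kr k) * X).trace := by rw [Finset.sum_mul, trace_sum]
      _ = X.trace := by rw [hKr, Matrix.one_mul]
  have hΦlin : ∀ (a b : ℂ) (X Y : Matrix (Fin 2) (Fin 2) ℂ),
      Φ (a • X + b • Y) = a • Φ X + b • Φ Y := by
    intro a b X Y
    simp only [hΦ, Matrix.mul_add, Matrix.add_mul, Matrix.mul_smul, Matrix.smul_mul,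
      Finset.sum_add_distrib, Finset.smul_sum]
  have hΦadd : Φ (vecMulVec fp (star fp) + vecMulVec fm (star fm)) =
      Φ (vecMulVec fp (star fp)) + Φ (vecMulVec fm (star fm)) := by
    simp only [hΦ, Matrix.mul_add, Matrix.add_mul, Finset.sum_add_distrib]
  have hΦQ : Φ (vecMulVec fm (star fm)) = 1 - Φ (vecMulVec fp (star fp)) := by
    rw [eq_sub_iff_add_eq, add_comm, ← hΦadd, hPQ, hΦone]
  -- trace against H₂
  have htr : ∀ X : Matrix (Fin 2) (Fin 2) ℂ, (X * H₂).trace =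
      (ν₂ : ℂ) * (star fp ⬝ᵥ (X *ᵥ fp) - star fm ⬝ᵥ (X *ᵥ fm)) := by
    intro X
    rw [hH₂, Matrix.mul_smul, trace_smul, Matrix.mul_sub, trace_sub,
      trace_mul_vmv, trace_mul_vmv, smul_eq_mul]
  -- completeness trace identity
  have hcomp : ∀ X : Matrix (Fin 2) (Fin 2) ℂ,
      star fp ⬝ᵥ (X *ᵥ fp) + star fm ⬝ᵥ (X *ᵥ fm) = X.trace := by
    intro X
    rw [← trace_mul_vmv, ← trace_mul_vmv, ← trace_add, ← Matrix.mul_add, hPQ, Matrix.mul_one]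
  have htrP : (vecMulVec fp (star fp)).trace = 1 := by
    rw [← Matrix.one_mul (vecMulVec fp (star fp)), trace_mul_vmv, Matrix.one_mulVec, hfp]
  have hθ' : star fp ⬝ᵥ (Φ (vecMulVec fp (star fp)) *ᵥ fp) = 1 - θ := by
    have h := hcomp (Φ (vecMulVec fp (star fp)))
    rw [hΦtr, htrP] at h
    linear_combination h + hθ
  -- dephasing
  have hΔ : Δ₂ (U * ρ₁ * Uᴴ) =
      (star fp ⬝ᵥ ((U * ρ₁ * Uᴴ) *ᵥ fp)) • vecMulVec fp (star fp) +
      (star fm ⬝ᵥ ((U * ρ₁ * Uᴴ) *ᵥ fm)) • vecMulVec fm (star fm) := by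
    rw [hΔ₂]
    congr 1 <;>
      rw [Matrix.mul_assoc, mul_vmv, mul_vmv, vmv_mulVec, smul_vmv]
  -- first trace
  have hT1 : (Φ (Δ₂ (U * ρ₁ * Uᴴ)) * H₂).trace =
      (ν₂ : ℂ) * ((star fp ⬝ᵥ ((U * ρ₁ * Uᴴ) *ᵥ fp) - star fm ⬝ᵥ ((U * ρ₁ * Uᴴ) *ᵥ fm)) *
        (1 - 2 * θ)) := by
    rw [htr, hΔ, hΦlin, hΦQ]
    simp only [Matrix.add_mulVec, Matrix.smul_mulVec, Matrix.sub_mulVec,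
      Matrix.one_mulVec, dotProduct_add, dotProduct_smul, dotProduct_sub, smul_eq_mul,
      hθ', ← hθ, hfp, hfm]
    ring
  have hT2 : (U * ρ₁ * Uᴴ * H₂).trace =
      (ν₂ : ℂ) * (star fp ⬝ᵥ ((U * ρ₁ * Uᴴ) *ᵥ fp) - star fm ⬝ᵥ ((U * ρ₁ * Uᴴ) *ᵥ fm)) :=
    htr _
  -- rotated projectors
  have hUPe : U * vecMulVec ep (star ep) * Uᴴ = vecMulVec (U *ᵥ ep) (star (U *ᵥ ep)) := by
    rw [mul_vmv, vmv_mul, ← Matrix.star_mulVec]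
  have hUQe : U * vecMulVec em (star em) * Uᴴ = vecMulVec (U *ᵥ em) (star (U *ᵥ em)) := by
    rw [mul_vmv, vmv_mul, ← Matrix.star_mulVec]
  have hρ' : U * ρ₁ * Uᴴ =
      (((2 * Real.cosh (β * ν₁) : ℝ) : ℂ)⁻¹ * (Real.exp (-(β * ν₁)) : ℂ)) •
        vecMulVec (U *ᵥ ep) (star (U *ᵥ ep)) +
      (((2 * Real.cosh (β * ν₁) : ℝ) : ℂ)⁻¹ * (Real.exp (β * ν₁) : ℂ)) •
        vecMulVec (U *ᵥ em) (star (U *ᵥ em)) := by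
    rw [hρ₁]
    simp only [Matrix.mul_add, Matrix.add_mul, Matrix.mul_smul, Matrix.smul_mul, smul_add,
      smul_smul]
    rw [hUPe, hUQe]
  have hnorm : ∀ v : Fin 2 → ℂ, star v ⬝ᵥ v = 1 → star (U *ᵥ v) ⬝ᵥ (U *ᵥ v) = 1 := by
    intro v hv
    rw [Matrix.dotProduct_mulVec, Matrix.star_mulVec, Matrix.vecMul_vecMul, hU,
      Matrix.vecMul_one, hv]
  have hcol : ∀ v : Fin 2 → ℂ, star v ⬝ᵥ v = 1 →
      (star fp ⬝ᵥ (U *ᵥ v)) * starRingEnd ℂ (star fp ⬝ᵥ (U *ᵥ v)) +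
      (star fm ⬝ᵥ (U *ᵥ v)) * starRingEnd ℂ (star fm ⬝ᵥ (U *ᵥ v)) = 1 := by
    intro v hv
    have h : star (U *ᵥ v) ⬝ᵥ ((vecMulVec fp (star fp) + vecMulVec fm (star fm)) *ᵥ (U *ᵥ v)) =
        1 := by
      rw [hPQ, Matrix.one_mulVec]; exact hnorm v hv
    rw [Matrix.add_mulVec, dotProduct_add, vmv_mulVec, vmv_mulVec, dotProduct_smul,
      dotProduct_smul, smul_eq_mul, smul_eq_mul, star_dp_comm (U *ᵥ v) fp,
      star_dp_comm (U *ᵥ v) fm] at h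
    linear_combination h
  have hrow : (star fp ⬝ᵥ (U *ᵥ ep)) * starRingEnd ℂ (star fp ⬝ᵥ (U *ᵥ ep)) +
      (star fp ⬝ᵥ (U *ᵥ em)) * starRingEnd ℂ (star fp ⬝ᵥ (U *ᵥ em)) = 1 := by
    have h : star fp ⬝ᵥ ((U * vecMulVec ep (star ep) * Uᴴ + U * vecMulVec em (star em) * Uᴴ) *ᵥ
        fp) = 1 := by
      rw [← Matrix.add_mul, ← Matrix.mul_add, hPQe, Matrix.mul_one, hU', Matrix.one_mulVec, hfp]
    rw [hUPe, hUQe, Matrix.add_mulVec, dotProduct_add, dp_vmv, dp_vmv] at h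
    exact h
  have hD : ((δ' : ℝ) : ℂ) =
      (star fp ⬝ᵥ (U *ᵥ em)) * starRingEnd ℂ (star fp ⬝ᵥ (U *ᵥ em)) := by
    rw [hδ', Complex.sq_norm]
    exact (Complex.mul_conj _).symm
  have hNb : (star fp ⬝ᵥ (U *ᵥ em)) * starRingEnd ℂ (star fp ⬝ᵥ (U *ᵥ em)) = (δ' : ℂ) := hD.symm
  have hNa : (star fp ⬝ᵥ (U *ᵥ ep)) * starRingEnd ℂ (star fp ⬝ᵥ (U *ᵥ ep)) = 1 - (δ' : ℂ) := by
    linear_combination hrow - hNb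
  have hMa : (star fm ⬝ᵥ (U *ᵥ ep)) * starRingEnd ℂ (star fm ⬝ᵥ (U *ᵥ ep)) = (δ' : ℂ) := by
    linear_combination hcol ep hep - hNa
  have hMb : (star fm ⬝ᵥ (U *ᵥ em)) * starRingEnd ℂ (star fm ⬝ᵥ (U *ᵥ em)) = 1 - (δ' : ℂ) := by
    linear_combination hcol em hem - hNb
  have hp : star fp ⬝ᵥ ((U * ρ₁ * Uᴴ) *ᵥ fp) =
      ((2 * Real.cosh (β * ν₁) : ℝ) : ℂ)⁻¹ *
        ((Real.exp (-(β * ν₁)) : ℂ) *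
          ((star fp ⬝ᵥ (U *ᵥ ep)) * starRingEnd ℂ (star fp ⬝ᵥ (U *ᵥ ep))) +
         (Real.exp (β * ν₁) : ℂ) *
          ((star fp ⬝ᵥ (U *ᵥ em)) * starRingEnd ℂ (star fp ⬝ᵥ (U *ᵥ em)))) := by
    rw [hρ', Matrix.add_mulVec, Matrix.smul_mulVec, Matrix.smul_mulVec,
      dotProduct_add, dotProduct_smul, dotProduct_smul, smul_eq_mul, smul_eq_mul, dp_vmv, dp_vmv]
    ring
  have hq : star fm ⬝ᵥ ((U * ρ₁ * Uᴴ) *ᵥ fm) =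
      ((2 * Real.cosh (β * ν₁) : ℝ) : ℂ)⁻¹ *
        ((Real.exp (-(β * ν₁)) : ℂ) *
          ((star fm ⬝ᵥ (U *ᵥ ep)) * starRingEnd ℂ (star fm ⬝ᵥ (U *ᵥ ep))) +
         (Real.exp (β * ν₁) : ℂ) *
          ((star fm ⬝ᵥ (U *ᵥ em)) * starRingEnd ℂ (star fm ⬝ᵥ (U *ᵥ em)))) := by
    rw [hρ', Matrix.add_mulVec, Matrix.smul_mulVec, Matrix.smul_mulVec,
      dotProduct_add, dotProduct_smul, dotProduct_smul, smul_eq_mul, smul_eq_mul, dp_vmv, dp_vmv]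
    ring
  have hth : ((2 * Real.cosh (β * ν₁) : ℝ) : ℂ)⁻¹ *
      ((Real.exp (-(β * ν₁)) : ℂ) - (Real.exp (β * ν₁) : ℂ)) =
      -((Real.tanh (β * ν₁) : ℝ) : ℂ) := by
    have hr : (2 * Real.cosh (β * ν₁))⁻¹ * (Real.exp (-(β * ν₁)) - Real.exp (β * ν₁)) =
        -Real.tanh (β * ν₁) := by
      rw [Real.tanh_eq_sinh_div_cosh, Real.sinh_eq, Real.cosh_eq]
      have h0 : Real.exp (β * ν₁) + Real.exp (-(β * ν₁)) ≠ 0 := by positivity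
      field_simp
      ring
    exact_mod_cast congrArg (fun r : ℝ => (r : ℂ)) hr
  have hpq : star fp ⬝ᵥ ((U * ρ₁ * Uᴴ) *ᵥ fp) - star fm ⬝ᵥ ((U * ρ₁ * Uᴴ) *ᵥ fm) =
      -(1 - 2 * (δ' : ℂ)) * ((Real.tanh (β * ν₁) : ℝ) : ℂ) := by
    rw [hp, hq]
    linear_combination
      ((2 * Real.cosh (β * ν₁) : ℝ) : ℂ)⁻¹ * (Real.exp (-(β * ν₁)) : ℂ) * hNa +
      ((2 * Real.cosh (β * ν₁) : ℝ) : ℂ)⁻¹ * (Real.exp (β * ν₁) : ℂ) * hNb -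
      ((2 * Real.cosh (β * ν₁) : ℝ) : ℂ)⁻¹ * (Real.exp (-(β * ν₁)) : ℂ) * hMa -
      ((2 * Real.cosh (β * ν₁) : ℝ) : ℂ)⁻¹ * (Real.exp (β * ν₁) : ℂ) * hMb +
      (1 - 2 * (δ' : ℂ)) * hth
  rw [hT1, hT2, hpq]
  ring
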